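/- Let ρ ∈ (0,1) and c_j = ((1−ρ)/(ρ(1+ρ))) ∑_{k=j}^∞ binom(2k,k) ρ^k / ((k+1)(1+ρ)^{2k}). Then, as j → ∞, c_j / [ ((1+ρ)/(ρ(1−ρ)√π)) · j^{−3/2} · (4ρ/(1+ρ)²)^j ] → 1. -/

import Mathlib

open MeasureTheory Filter Topology

/-- Pollaczek polynomials with parameters a = 1, b = 0. -/
noncomputable def pol : ℕ → ℝ → ℝ
  | 0, _ => 1
  | 1, x => 2 * x
  | (n+2), x => (2 * ((n:ℝ) + 2) * x * pol (n+1) x - ((n:ℝ) + 1) * pol n x) / ((n:ℝ) + 2)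

/-- Rescaled polynomials `Q_n(x) = ρ^{-n/2} P_n((1+ρ)x/(2√ρ))`. -/
noncomputable def Q (ρ : ℝ) (n : ℕ) (x : ℝ) : ℝ :=
  pol n ((1 + ρ) * x / (2 * Real.sqrt ρ)) / (Real.sqrt ρ) ^ n

/-- `x_ρ(θ) = (2√ρ/(1+ρ)) cos θ`. -/
noncomputable def X (ρ θ : ℝ) : ℝ := (2 * Real.sqrt ρ / (1 + ρ)) * Real.cos θ

/-- Density of the spectral measure in the variable θ. -/
noncomputable def W (θ : ℝ) : ℝ :=
  (Real.sin θ / Real.cosh (Real.pi * (Real.cos θ / Real.sin θ) / 2)) *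
    Real.exp ((θ - Real.pi / 2) * (Real.cos θ / Real.sin θ))

/-- `G_ρ(θ) = 𝒫(θ, √ρ) = ∑ ρ^m Q_m(x_ρ(θ))`. -/
noncomputable def G (ρ θ : ℝ) : ℝ :=
  (1 - 2 * Real.sqrt ρ * Real.cos θ + ρ) ^ (-(1:ℝ)/2) *
    Real.exp ((Real.cos θ / Real.sin θ) *
      Real.arctan (Real.sqrt ρ * Real.sin θ / (1 - Real.sqrt ρ * Real.cos θ)))

/-- Powers of the sub-stochastic tridiagonal matrix `A` of the absorbed M/M/1-PS chain. -/
noncomputable def ker (ρ : ℝ) : ℕ → ℕ → ℕ → ℝ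
  | 0, n, m => if n = m then 1 else 0
  | (k+1), 0, m => (ρ / (1 + ρ)) * ker ρ k 1 m
  | (k+1), (n+1), m => (ρ / (1 + ρ)) * ker ρ k (n+2) m +
      (((n:ℝ) + 1) / (((n:ℝ) + 2) * (1 + ρ))) * ker ρ k n m

/-- Distribution of the number of customers served in the residual busy period. -/
noncomputable def resBusy (ρ : ℝ) (ℓ : ℕ) : ℝ :=
  ((1 - ρ) / (ρ * (1 + ρ))) * ∑' k : ℕ,
    (Nat.choose (2*(k + ℓ)) (k + ℓ) : ℝ) * ρ ^ (k + ℓ) /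
      (((k:ℝ) + (ℓ:ℝ) + 1) * (1 + ρ) ^ (2*(k + ℓ)))


open Nat in
noncomputable def ccb (j : ℕ) : ℝ := (Nat.centralBinom j : ℝ) * Real.sqrt j / 4 ^ j

open Nat in
lemma cb_sqrt_eq (j : ℕ) (hj : 1 ≤ j) :
    ccb j = Stirling.stirlingSeq (2 * j) / (Stirling.stirlingSeq j) ^ 2 := by
  unfold ccb
  have hjpos : (0:ℝ) < j := by exact_mod_cast hj
  have hfact : ((2 * j)! : ℝ) = (Nat.centralBinom j : ℝ) * (j ! : ℝ) * (j ! : ℝ) := by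
    have := Nat.choose_mul_factorial_mul_factorial (show j ≤ 2 * j by omega)
    rw [show 2 * j - j = j by omega] at this
    rw [Nat.centralBinom]
    exact_mod_cast this.symm
  set S := Real.sqrt (j:ℝ) with hSdef
  set P := ((j:ℝ)/Real.exp 1)^j with hPdef
  set F := ((j !:ℕ) : ℝ) with hFdef
  have hS : S ≠ 0 := by positivity
  have hS2 : S ^ 2 = j := Real.sq_sqrt (by positivity)
  have hF : F ≠ 0 := by positivity
  have hP : P ≠ 0 := by positivity
  have hs2 : Stirling.stirlingSeq (2 * j) = ((2*j)! : ℝ) / (2 * S * (4 ^ j * P ^ 2)) := by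
    rw [Stirling.stirlingSeq]
    congr 1
    push_cast
    rw [show (2:ℝ) * (2 * (j:ℝ)) = 2 ^ 2 * (j:ℝ) by ring, Real.sqrt_mul (by positivity),
      Real.sqrt_sq (by norm_num : (0:ℝ) ≤ 2)]
    rw [hPdef, show 2 * j = j * 2 by ring, pow_mul,
      show (2 * (j:ℝ) / Real.exp 1) = 2 * ((j:ℝ)/Real.exp 1) by ring, mul_pow, mul_pow,
      ← pow_mul, show j * 2 = 2 * j by ring, pow_mul]
    norm_num
    exact hSdef.symm
  have hsj : (Stirling.stirlingSeq j) ^ 2 = F ^ 2 / (2 * S ^ 2 * P ^ 2) := by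
    rw [Stirling.stirlingSeq, div_pow, mul_pow, Real.sq_sqrt (by positivity : (0:ℝ) ≤ 2 * j), hS2]
  rw [hs2, hsj, hfact]
  field_simp

lemma tendsto_ccb : Filter.Tendsto ccb Filter.atTop (𝓝 (Real.sqrt Real.pi)⁻¹) := by
  have hπ : Real.sqrt Real.pi ≠ 0 := by positivity
  have hm : Filter.Tendsto (fun j : ℕ => 2 * j) Filter.atTop Filter.atTop :=
    StrictMono.tendsto_atTop (fun a b h => by omega)
  have h2 : Filter.Tendsto (fun j : ℕ => Stirling.stirlingSeq (2 * j)) Filter.atTop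
      (𝓝 (Real.sqrt Real.pi)) := Stirling.tendsto_stirlingSeq_sqrt_pi.comp hm
  have h3 : Filter.Tendsto (fun j : ℕ => (Stirling.stirlingSeq j) ^ 2) Filter.atTop
      (𝓝 ((Real.sqrt Real.pi) ^ 2)) := Stirling.tendsto_stirlingSeq_sqrt_pi.pow 2
  have h4 := h2.div h3 (by positivity)
  have h5 : Real.sqrt Real.pi / (Real.sqrt Real.pi) ^ 2 = (Real.sqrt Real.pi)⁻¹ := by
    field_simp [sq]
  rw [h5] at h4
  apply h4.congr'
  filter_upwards [Filter.eventually_ge_atTop 1] with j hj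
  exact (cb_sqrt_eq j hj).symm

lemma aux_div (a b : ℝ) :
    Filter.Tendsto (fun j : ℕ => ((j:ℝ) + a) / ((j:ℝ) + b)) Filter.atTop (𝓝 1) := by
  have h1 : Filter.Tendsto (fun j : ℕ => (j:ℝ) + b) Filter.atTop Filter.atTop :=
    Filter.tendsto_atTop_add_const_right _ b tendsto_natCast_atTop_atTop
  have h0 : Filter.Tendsto (fun j : ℕ => 1 + (a - b) / ((j:ℝ) + b)) Filter.atTop (𝓝 (1 + 0)) :=
    tendsto_const_nhds.add (Filter.Tendsto.div_atTop tendsto_const_nhds h1)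
  rw [add_zero] at h0
  apply h0.congr'
  filter_upwards [h1.eventually_gt_atTop 0] with j hj
  field_simp
  ring

noncomputable def aaux (ρ : ℝ) (k : ℕ) : ℝ :=
  (Nat.centralBinom k : ℝ) * (ρ / (1 + ρ) ^ 2) ^ k / ((k : ℝ) + 1)

lemma aaux_pos {ρ : ℝ} (hρ : 0 < ρ) (k : ℕ) : 0 < aaux ρ k := by
  have h1 : (0:ℝ) < 1 + ρ := by linarith
  have h2 : (0:ℝ) < (Nat.centralBinom k : ℝ) := by
    exact_mod_cast Nat.centralBinom_pos k
  unfold aaux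
  positivity

lemma aaux_succ_le {ρ : ℝ} (hρ : 0 < ρ) (k : ℕ) :
    aaux ρ (k + 1) ≤ (4 * ρ / (1 + ρ) ^ 2) * aaux ρ k := by
  have h1 : (0:ℝ) < 1 + ρ := by linarith
  have key : ((k:ℝ) + 1) * (Nat.centralBinom (k+1) : ℝ)
      = 2 * (2 * (k:ℝ) + 1) * (Nat.centralBinom k : ℝ) := by
    exact_mod_cast Nat.succ_mul_centralBinom_succ k
  have hcb : (Nat.centralBinom (k+1) : ℝ)
      = 2 * (2 * (k:ℝ) + 1) * (Nat.centralBinom k : ℝ) / ((k:ℝ) + 1) := by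
    field_simp
    linear_combination key
  have h2 : (0:ℝ) < (Nat.centralBinom k : ℝ) := by exact_mod_cast Nat.centralBinom_pos k
  have hrepr : (4 * ρ / (1 + ρ) ^ 2) * aaux ρ k - aaux ρ (k + 1)
      = ((6:ℝ) / (((k:ℝ) + 1) * ((k:ℝ) + 2)))
          * ((Nat.centralBinom k : ℝ) * (ρ / (1 + ρ) ^ 2) ^ (k+1)) := by
    unfold aaux
    rw [hcb]
    push_cast
    rw [show 4 * ρ / (1 + ρ) ^ 2 = 4 * (ρ / (1 + ρ) ^ 2) by ring]
    generalize ρ / (1 + ρ) ^ 2 = x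
    field_simp
    ring
  nlinarith [mul_pos (div_pos (by norm_num : (0:ℝ) < 6)
    (by positivity : (0:ℝ) < ((k:ℝ)+1)*((k:ℝ)+2)))
    (mul_pos h2 (by positivity : (0:ℝ) < (ρ / (1 + ρ) ^ 2) ^ (k+1)))]

lemma aaux_le {ρ : ℝ} (hρ : 0 < ρ) (k j : ℕ) :
    aaux ρ (k + j) ≤ aaux ρ j * (4 * ρ / (1 + ρ) ^ 2) ^ k := by
  have h1 : (0:ℝ) < 1 + ρ := by linarith
  have hq : (0:ℝ) ≤ 4 * ρ / (1 + ρ) ^ 2 := by positivity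
  induction k with
  | zero => simp
  | succ n ih =>
      calc aaux ρ (n + 1 + j) = aaux ρ ((n + j) + 1) := by ring_nf
        _ ≤ (4 * ρ / (1 + ρ) ^ 2) * aaux ρ (n + j) := aaux_succ_le hρ (n + j)
        _ ≤ (4 * ρ / (1 + ρ) ^ 2) * (aaux ρ j * (4 * ρ / (1 + ρ) ^ 2) ^ n) :=
            mul_le_mul_of_nonneg_left ih hq
        _ = aaux ρ j * (4 * ρ / (1 + ρ) ^ 2) ^ (n + 1) := by ring

lemma aaux_repr {ρ : ℝ} (hρ : 0 < ρ) (m : ℕ) (hm : 1 ≤ m) :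
    aaux ρ m = ccb m * (4 * ρ / (1 + ρ) ^ 2) ^ m / (Real.sqrt m * ((m:ℝ) + 1)) := by
  have h1 : (0:ℝ) < 1 + ρ := by linarith
  have hs : Real.sqrt m ≠ 0 := by
    have : (0:ℝ) < m := by exact_mod_cast hm
    positivity
  unfold aaux ccb
  rw [show 4 * ρ / (1 + ρ) ^ 2 = 4 * (ρ / (1 + ρ) ^ 2) by ring, mul_pow]
  field_simp

lemma ccb_pos (j : ℕ) (hj : 1 ≤ j) : 0 < ccb j := by
  have h2 : (0:ℝ) < (Nat.centralBinom j : ℝ) := by exact_mod_cast Nat.centralBinom_pos j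
  have h3 : (0:ℝ) < (j:ℝ) := by exact_mod_cast hj
  unfold ccb
  positivity

lemma tendsto_ratio {ρ : ℝ} (hρ : 0 < ρ) (k : ℕ) :
    Filter.Tendsto (fun j : ℕ => aaux ρ (k + j) / aaux ρ j) Filter.atTop
      (𝓝 ((4 * ρ / (1 + ρ) ^ 2) ^ k)) := by
  have h1 : (0:ℝ) < 1 + ρ := by linarith
  have hπ : (Real.sqrt Real.pi)⁻¹ ≠ 0 := by positivity
  set q : ℝ := 4 * ρ / (1 + ρ) ^ 2 with hqdef
  have hqpos : 0 < q := by positivity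
  have hsh : Filter.Tendsto (fun j : ℕ => k + j) Filter.atTop Filter.atTop :=
    StrictMono.tendsto_atTop (fun a b h => by omega)
  have hcc : Filter.Tendsto (fun j : ℕ => ccb (k + j) / ccb j) Filter.atTop (𝓝 1) := by
    have h := (tendsto_ccb.comp hsh).div tendsto_ccb hπ
    rw [div_self hπ] at h
    exact h.congr (fun j => rfl)
  have hd : Filter.Tendsto (fun j : ℕ => (j:ℝ) / ((j:ℝ) + k)) Filter.atTop (𝓝 1) := by
    simpa using aux_div 0 (k:ℝ)
  have hs : Filter.Tendsto (fun j : ℕ => Real.sqrt j / Real.sqrt ((k:ℕ) + j :ℕ))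
      Filter.atTop (𝓝 1) := by
    have hc := (Real.continuous_sqrt.tendsto 1).comp hd
    rw [Real.sqrt_one] at hc
    apply hc.congr
    intro j
    simp only [Function.comp_apply]
    rw [Real.sqrt_div (by positivity)]
    congr 1
    push_cast
    ring
  have hn : Filter.Tendsto (fun j : ℕ => ((j:ℝ) + 1) / (((k:ℕ) + j :ℕ) + 1 :ℝ))
      Filter.atTop (𝓝 1) := by
    have := aux_div 1 ((k:ℝ) + 1)
    apply this.congr
    intro j
    push_cast
    ring_nf
  have hprod : Filter.Tendsto (fun j : ℕ =>
      (ccb (k + j) / ccb j) * q ^ k *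
        ((Real.sqrt j / Real.sqrt ((k:ℕ) + j :ℕ)) * (((j:ℝ) + 1) / (((k:ℕ) + j :ℕ) + 1 :ℝ))))
      Filter.atTop (𝓝 (1 * q ^ k * (1 * 1))) :=
    (hcc.mul tendsto_const_nhds).mul (hs.mul hn)
  rw [one_mul, one_mul, mul_one] at hprod
  apply hprod.congr'
  filter_upwards [Filter.eventually_ge_atTop 1] with j hj
  rw [aaux_repr hρ (k + j) (by omega), aaux_repr hρ j hj, ← hqdef, pow_add]
  have hsj : (0:ℝ) < Real.sqrt j := Real.sqrt_pos.mpr (by exact_mod_cast hj)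
  have hskj : (0:ℝ) < Real.sqrt ((k + j : ℕ) : ℝ) := Real.sqrt_pos.mpr (by positivity)
  have hcj : (0:ℝ) < ccb j := ccb_pos j hj
  have hckj : (0:ℝ) < ccb (k + j) := ccb_pos (k + j) (by omega)
  have hj1 : ((j:ℝ) + 1) ≠ 0 := by positivity
  have hkj1 : (((k + j : ℕ):ℝ) + 1) ≠ 0 := by positivity
  have hqk : q ^ k ≠ 0 := by positivity
  have hqj : q ^ j ≠ 0 := by positivity
  field_simp

lemma resBusy_eq {ρ : ℝ} (hρ : 0 < ρ) (ℓ : ℕ) :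
    resBusy ρ ℓ = ((1 - ρ) / (ρ * (1 + ρ))) * ∑' k : ℕ, aaux ρ (k + ℓ) := by
  have h1 : (0:ℝ) < 1 + ρ := by linarith
  unfold resBusy
  congr 1
  apply tsum_congr
  intro k
  unfold aaux
  rw [Nat.centralBinom, div_pow, ← pow_mul]
  push_cast
  have h2 : ((1:ℝ)+ρ)^(2*(k+ℓ)) ≠ 0 := by positivity
  have h3 : (k:ℝ)+(ℓ:ℝ)+1 ≠ 0 := by positivity
  field_simp

/-- Asymptotics of `P(b = j)` as j → ∞. -/
theorem stmt17 (ρ : ℝ) (hρ : ρ ∈ Set.Ioo (0:ℝ) 1) :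
    Filter.Tendsto (fun j : ℕ =>
      resBusy ρ j /
        (((1 + ρ) / (ρ * (1 - ρ) * Real.sqrt Real.pi)) * (j:ℝ) ^ (-(3:ℝ)/2) *
          (4 * ρ / (1 + ρ) ^ 2) ^ j))
      Filter.atTop (nhds 1) := by
  obtain ⟨hρ0, hρ1⟩ := hρ
  have h1 : (0:ℝ) < 1 + ρ := by linarith
  have h1m : (0:ℝ) < 1 - ρ := by linarith
  have hπ : (0:ℝ) < Real.sqrt Real.pi := Real.sqrt_pos.mpr Real.pi_pos
  set q : ℝ := 4 * ρ / (1 + ρ) ^ 2 with hqdef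
  have hq0 : 0 < q := by positivity
  have hq1 : q < 1 := by
    rw [hqdef, div_lt_one (by positivity)]
    nlinarith
  set C1 : ℝ := (1 + ρ) / (ρ * (1 - ρ) * Real.sqrt Real.pi) with hC1def
  set C0 : ℝ := (1 - ρ) / (ρ * (1 + ρ)) with hC0def
  have hC1 : 0 < C1 := by positivity
  have hbound : ∀ j : ℕ, ∀ k : ℕ, ‖aaux ρ (k + j) / aaux ρ j‖ ≤ q ^ k := by
    intro j k
    rw [Real.norm_eq_abs, abs_of_nonneg (le_of_lt (div_pos (aaux_pos hρ0 _) (aaux_pos hρ0 _)))]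
    rw [div_le_iff₀ (aaux_pos hρ0 j)]
    linarith [aaux_le hρ0 k j]
  have hT : Filter.Tendsto (fun j : ℕ => ∑' k : ℕ, aaux ρ (k + j) / aaux ρ j) Filter.atTop
      (𝓝 ((1 - q)⁻¹)) := by
    have h := tendsto_tsum_of_dominated_convergence
      (summable_geometric_of_lt_one hq0.le hq1)
      (fun k => tendsto_ratio hρ0 k) (Filter.Eventually.of_forall hbound)
    rwa [tsum_geometric_of_lt_one hq0.le hq1] at h
  have hT' : Filter.Tendsto (fun j : ℕ => (∑' k : ℕ, aaux ρ (k + j)) / aaux ρ j) Filter.atTop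
      (𝓝 ((1 - q)⁻¹)) := by
    apply hT.congr
    intro j
    exact tsum_div_const
  have hfrac : Filter.Tendsto (fun j : ℕ => (j:ℝ) / ((j:ℝ) + 1)) Filter.atTop (𝓝 1) := by
    simpa using aux_div 0 1
  have hmain : Filter.Tendsto (fun j : ℕ =>
      ((∑' k : ℕ, aaux ρ (k + j)) / aaux ρ j) * ((ccb j * ((j:ℝ) / ((j:ℝ) + 1))) * (C0 / C1)))
      Filter.atTop (𝓝 ((1 - q)⁻¹ * (((Real.sqrt Real.pi)⁻¹ * 1) * (C0 / C1)))) :=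
    hT'.mul ((tendsto_ccb.mul hfrac).mul tendsto_const_nhds)
  have hone : (1 - q)⁻¹ * (((Real.sqrt Real.pi)⁻¹ * 1) * (C0 / C1)) = 1 := by
    have h1mq : 1 - q = (1 - ρ) ^ 2 / (1 + ρ) ^ 2 := by
      rw [hqdef]; field_simp; ring
    rw [h1mq, hC0def, hC1def]
    field_simp
  rw [hone] at hmain
  apply hmain.congr'
  filter_upwards [Filter.eventually_ge_atTop 1] with j hj
  have hj0 : (0:ℝ) < j := by exact_mod_cast hj
  have hrpow : (j:ℝ) ^ (-(3:ℝ)/2) = ((j:ℝ) * Real.sqrt j)⁻¹ := by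
    rw [show (-(3:ℝ)/2) = -((3:ℝ)/2) by norm_num, Real.rpow_neg hj0.le]
    congr 1
    rw [show ((3:ℝ)/2) = 1 + 1/2 by norm_num, Real.rpow_add hj0, Real.rpow_one,
      ← Real.sqrt_eq_rpow]
  have hsj : (0:ℝ) < Real.sqrt j := Real.sqrt_pos.mpr hj0
  have hcj : (0:ℝ) < ccb j := ccb_pos j hj
  have hqj : q ^ j ≠ 0 := by positivity
  rw [resBusy_eq hρ0 j, aaux_repr hρ0 j hj, ← hqdef, hrpow, ← hC0def]
  field_simp
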